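/- Let X be a regular Hausdorff space of countable spread. If X is not hereditarily separable, then X contains a subspace that is hereditarily Lindelöf and not separable (an L-space). -/

import Mathlib

open TopologicalSpace Set

namespace LspaceAux

open Cardinal Ordinal

noncomputable abbrev om1 : Ordinal.{0} := (Cardinal.aleph 1).ord

lemma countable_Iio_of_lt {o : Ordinal.{0}} (h : o < om1) : (Set.Iio o).Countable := by
  have h1 : o.card < Cardinal.aleph 1 := Cardinal.lt_ord.mp h
  have h2 : o.card ≤ ℵ₀ := by
    rwa [← Cardinal.succ_aleph0, Order.lt_succ_iff] at h1
  rw [← Cardinal.le_aleph0_iff_set_countable, Ordinal.mk_Iio_ordinal,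
    ← Cardinal.lift_aleph0.{1,0}]
  exact Cardinal.lift_le.mpr h2

lemma not_countable_Iio_om1 : ¬ (Set.Iio om1).Countable := by
  intro h
  rw [← Cardinal.le_aleph0_iff_set_countable, Ordinal.mk_Iio_ordinal, Cardinal.card_ord,
    ← Cardinal.lift_aleph0.{1,0}, Cardinal.lift_le] at h
  exact absurd h (not_le.mpr Cardinal.aleph0_lt_aleph_one)

lemma one_lt_om1 : (1 : Ordinal.{0}) < om1 := by
  have : (1 : Ordinal.{0}) < ω_ 1 := lt_trans Ordinal.one_lt_omega0 Ordinal.omega0_lt_omega_one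
  rwa [← Cardinal.ord_aleph] at this

lemma exists_bound {A : Set Ordinal.{0}} (hA : A.Countable) (hlt : ∀ a ∈ A, a < om1) :
    ∃ o, o < om1 ∧ ∀ a ∈ A, a < o := by
  rcases A.eq_empty_or_nonempty with rfl | hne
  · exact ⟨1, one_lt_om1, by simp⟩
  obtain ⟨g, rfl⟩ := hA.exists_eq_range hne
  refine ⟨⨆ n, Order.succ (g n), ?_, ?_⟩
  · have := Ordinal.iSup_lt_omega_one (f := fun n => Order.succ (g n))
      (fun n => by
        rw [← Cardinal.ord_aleph]
        exact (Cardinal.isSuccLimit_ord (Cardinal.aleph0_le_aleph 1)).succ_lt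
          (hlt _ (mem_range_self n)))
    rwa [← Cardinal.ord_aleph] at this
  · rintro a ⟨n, rfl⟩
    exact lt_of_lt_of_le (Order.lt_succ _) (Ordinal.le_iSup _ n)

/-- Transfinite recursion of length ω₁ where at each step we choose an element
depending only on the (countable) set of previously chosen elements. -/
lemma exists_om1_seq {Y : Type*} {P : Set Y → Y → Prop}
    (h : ∀ t : Set Y, t.Countable → ∃ y, P t y) :
    ∃ f : Ordinal.{0} → Y, ∀ o < om1, P (f '' Set.Iio o) (f o) := by
  have hne : Nonempty Y := ⟨(h ∅ countable_empty).choose⟩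
  classical
  let step : Set Y → Y := fun t => if ht : ∃ y, P t y then ht.choose else Classical.arbitrary Y
  let f : Ordinal.{0} → Y :=
    fun o => Ordinal.lt_wf.fix (fun o ih => step (Set.range fun i : Set.Iio o => ih i i.2)) o
  have hf : ∀ o, f o = step (f '' Set.Iio o) := by
    intro o
    show Ordinal.lt_wf.fix _ o = _
    rw [WellFounded.fix_eq]
    congr 1
    exact (Set.image_eq_range f (Set.Iio o)).symm
  refine ⟨f, fun o ho => ?_⟩
  have hex := h _ ((countable_Iio_of_lt ho).image f)
  rw [hf o]
  simpa only [step, dif_pos hex] using hex.choose_spec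

lemma separableSpace_subtype_iff {X : Type*} [TopologicalSpace X] {S : Set X} :
    SeparableSpace ↥S ↔ ∃ t, t ⊆ S ∧ t.Countable ∧ S ⊆ closure t := by
  constructor
  · rintro ⟨d, dc, dd⟩
    refine ⟨Subtype.val '' d, Subtype.coe_image_subset S d, dc.image _, fun x hx => ?_⟩
    exact closure_subtype.mp (by rw [dd.closure_eq]; trivial : (⟨x, hx⟩ : ↥S) ∈ closure d)
  · rintro ⟨t, hts, htc, hcl⟩
    refine ⟨⟨Subtype.val ⁻¹' t, htc.preimage Subtype.coe_injective, ?_⟩⟩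
    rw [dense_iff_closure_eq, Set.eq_univ_iff_forall]
    intro x
    rw [closure_subtype, Subtype.image_preimage_coe, Set.inter_eq_self_of_subset_right hts]
    exact hcl x.2

lemma discrete_of_isolated {X : Type*} [TopologicalSpace X] {D : Set X}
    (h : ∀ x ∈ D, ∃ U, IsOpen U ∧ U ∩ D = {x}) : DiscreteTopology ↥D := by
  apply discreteTopology_iff_isOpen_singleton.mpr
  intro p
  obtain ⟨U, hU, hUD⟩ := h (↑p) p.2
  have hset : ({p} : Set ↥D) = Subtype.val ⁻¹' U := by
    ext q
    simp only [mem_singleton_iff, mem_preimage]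
    constructor
    · rintro rfl
      have h1 : (q : X) ∈ U ∩ D := by rw [hUD]; exact rfl
      exact h1.1
    · intro hq
      have : (q : X) ∈ U ∩ D := ⟨hq, q.2⟩
      rw [hUD] at this
      exact Subtype.ext this
  rw [hset]
  exact hU.preimage continuous_subtype_val

lemma countable_of_image {α β : Type*} {s : Set α} {f : α → β}
    (hinj : Set.InjOn f s) (h : (f '' s).Countable) : s.Countable :=
  Set.MapsTo.countable_of_injOn (Set.mapsTo_image f s) hinj h

end LspaceAux

open LspaceAux Cardinal Ordinal

/-- A space has *countable spread* if every subspace that is discrete in its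
subspace topology is countable. -/
def CountableSpread (X : Type*) [TopologicalSpace X] : Prop :=
  ∀ D : Set X, DiscreteTopology ↥D → D.Countable

theorem countable_spread_not_hereditarily_separable_gives_Lspace
    {X : Type*} [TopologicalSpace X] [T2Space X] [RegularSpace X]
    (hs : CountableSpread X)
    (hns : ¬ ∀ S : Set X, SeparableSpace ↥S) :
    ∃ S : Set X, HereditarilyLindelofSpace ↥S ∧ ¬ SeparableSpace ↥S := by
  push_neg at hns
  obtain ⟨S, hS⟩ := hns
  -- Step 1: a left-separated ω₁-sequence in S.
  have hstep1 : ∀ t : Set X, t.Countable → ∃ y, y ∈ S ∧ y ∉ closure (t ∩ S) := by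
    intro t ht
    by_contra hcon
    push_neg at hcon
    exact hS (separableSpace_subtype_iff.mpr
      ⟨t ∩ S, inter_subset_right, ht.mono inter_subset_left, fun x hx => hcon x hx⟩)
  obtain ⟨f, hf⟩ := exists_om1_seq hstep1
  have hfS : ∀ o < om1, f o ∈ S := fun o ho => (hf o ho).1
  have hfd : ∀ o < om1, f o ∉ closure (f '' Set.Iio o) := by
    intro o ho
    have h2 : f '' Set.Iio o ⊆ S := by
      rintro _ ⟨b, hb, rfl⟩; exact hfS b (lt_trans hb ho)
    have := (hf o ho).2
    rwa [Set.inter_eq_self_of_subset_left h2] at this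
  have hfi : ∀ a < om1, ∀ b < om1, f a = f b → a = b := by
    intro a ha b hb hab
    by_contra hne
    rcases lt_or_gt_of_ne hne with hl | hl
    · exact hfd b hb (hab ▸ subset_closure ⟨a, hl, rfl⟩)
    · exact hfd a ha (subset_closure ⟨b, hl, hab.symm⟩)
  set L : Set X := f '' Set.Iio om1 with hLdef
  refine ⟨L, ?_, ?_⟩
  · -- L is hereditarily Lindelöf
    by_contra hHL
    have hex : ∃ s : Set ↥L, ¬ IsLindelof s := by
      by_contra h2
      push_neg at h2
      exact hHL ⟨fun t _ => h2 t⟩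
    obtain ⟨s, hsL⟩ := hex
    have hcov : ¬ ∀ ι : Type _, ∀ U : ι → Set ↥L, (∀ i, IsOpen (U i)) → (s ⊆ ⋃ i, U i) →
        ∃ r : Set ι, r.Countable ∧ s ⊆ ⋃ i ∈ r, U i :=
      fun h => hsL (isLindelof_iff_countable_subcover.mpr (fun {ι} => h ι))
    push_neg at hcov
    obtain ⟨ι, U, hUo, hUc, hUn⟩ := hcov
    -- transfer the cover to X
    have hV : ∀ i, ∃ V : Set X, IsOpen V ∧ Subtype.val ⁻¹' V = U i :=
      fun i => isOpen_induced_iff.mp (hUo i)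
    choose V hVo hVU using hV
    set T : Set X := Subtype.val '' s with hTdef
    have hTL : T ⊆ L := Subtype.coe_image_subset L s
    have hTcov : ∀ x ∈ T, ∃ i, x ∈ V i := by
      rintro _ ⟨p, hp, rfl⟩
      obtain ⟨i, hi⟩ := mem_iUnion.mp (hUc hp)
      exact ⟨i, by rw [← hVU i] at hi; exact hi⟩
    have hTn : ∀ r : Set ι, r.Countable → ∃ x ∈ T, ∀ i ∈ r, x ∉ V i := by
      intro r hr
      by_contra hcon
      push_neg at hcon
      refine hUn r hr (fun p hp => ?_)
      obtain ⟨i, hir, hiV⟩ := hcon p ⟨p, hp, rfl⟩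
      exact mem_iUnion₂.mpr ⟨i, hir, by rw [← hVU i]; exact hiV⟩
    -- Step 2: a right-separated ω₁-sequence in T.
    have hstep2 : ∀ t : Set (X × ι), t.Countable →
        ∃ p : X × ι, p.1 ∈ T ∧ p.1 ∈ V p.2 ∧ ∀ q ∈ t, p.1 ∉ V q.2 := by
      intro t ht
      obtain ⟨x, hxT, hxn⟩ := hTn (Prod.snd '' t) (ht.image _)
      obtain ⟨i, hi⟩ := hTcov x hxT
      exact ⟨(x, i), hxT, hi, fun q hq => hxn q.2 ⟨q, hq, rfl⟩⟩
    obtain ⟨g, hg⟩ := exists_om1_seq hstep2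
    have hgT : ∀ o < om1, (g o).1 ∈ T := fun o ho => (hg o ho).1
    have hgV : ∀ o < om1, (g o).1 ∈ V (g o).2 := fun o ho => (hg o ho).2.1
    have hgn : ∀ o < om1, ∀ b < o, (g o).1 ∉ V (g b).2 :=
      fun o ho b hb => (hg o ho).2.2 (g b) ⟨b, hb, rfl⟩
    -- indices of g-values in the left-separated sequence f
    have hgL : ∀ o < om1, ∃ a, a < om1 ∧ f a = (g o).1 := by
      intro o ho
      obtain ⟨a, ha, hfa⟩ := hTL (hgT o ho)
      exact ⟨a, ha, hfa⟩
    classical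
    let hfun : Ordinal.{0} → Ordinal.{0} := fun o =>
      if h : ∃ a, a < om1 ∧ f a = (g o).1 then h.choose else 0
    have hfun_lt : ∀ o < om1, hfun o < om1 := by
      intro o ho
      have h := hgL o ho
      simp only [hfun, dif_pos h]
      exact h.choose_spec.1
    have hfun_eq : ∀ o < om1, f (hfun o) = (g o).1 := by
      intro o ho
      have h := hgL o ho
      simp only [hfun, dif_pos h]
      exact h.choose_spec.2
    have hg_inj : ∀ a < om1, ∀ b < om1, (g a).1 = (g b).1 → a = b := by
      intro a ha b hb hab
      by_contra hne
      rcases lt_or_gt_of_ne hne with hl | hl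
      · exact hgn b hb a hl (hab ▸ hgV a ha)
      · exact hgn a ha b hl (hab ▸ hgV b hb)
    have hfun_inj : ∀ a < om1, ∀ b < om1, hfun a = hfun b → a = b := by
      intro a ha b hb hab
      apply hg_inj a ha b hb
      rw [← hfun_eq a ha, ← hfun_eq b hb, hab]
    -- Step 3: a subsequence increasing in both well-orders.
    have hstep3 : ∀ t : Set Ordinal.{0}, t.Countable →
        ∃ α, (α < om1 ∧ ∀ β ∈ t, β < om1 → β < α ∧ hfun β < hfun α) := by
      intro t ht
      obtain ⟨β₁, hβ₁, hβ₁b⟩ := exists_bound (A := t ∩ Set.Iio om1)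
        (ht.mono inter_subset_left) (fun a ha => ha.2)
      obtain ⟨β₂, hβ₂, hβ₂b⟩ := exists_bound (A := hfun '' (t ∩ Set.Iio om1))
        ((ht.mono inter_subset_left).image _)
        (by rintro _ ⟨a, ha, rfl⟩; exact hfun_lt a ha.2)
      set B : Set Ordinal.{0} := {α | α < om1 ∧ hfun α < β₂} with hBdef
      have hBc : B.Countable := by
        apply countable_of_image (f := hfun)
        · intro a ha b hb hab
          exact hfun_inj a ha.1 b hb.1 hab
        · apply (countable_Iio_of_lt hβ₂).mono
          rintro _ ⟨a, ha, rfl⟩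
          exact ha.2
      have hnc : ¬ (Set.Iio om1 ⊆ Set.Iio β₁ ∪ B) := by
        intro hsub
        exact not_countable_Iio_om1 (((countable_Iio_of_lt hβ₁).union hBc).mono hsub)
      obtain ⟨α, hα, hαn⟩ := not_subset.mp hnc
      simp only [Set.mem_union, not_or] at hαn
      refine ⟨α, hα, fun β hβ hβΩ => ?_⟩
      constructor
      · exact lt_of_lt_of_le (hβ₁b β ⟨hβ, hβΩ⟩) (not_lt.mp (fun h => hαn.1 h))
      · refine lt_of_lt_of_le (hβ₂b _ ⟨β, ⟨hβ, hβΩ⟩, rfl⟩) ?_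
        by_contra hcon
        exact hαn.2 ⟨hα, not_le.mp hcon⟩
    obtain ⟨a, ha⟩ := exists_om1_seq hstep3
    have ha_lt : ∀ o < om1, a o < om1 := fun o ho => (ha o ho).1
    have ha_mono : ∀ o < om1, ∀ b < o, a b < a o ∧ hfun (a b) < hfun (a o) :=
      fun o ho b hb => (ha o ho).2 (a b) ⟨b, hb, rfl⟩ (ha_lt b (lt_trans hb ho))
    -- The discrete set
    set e : Ordinal.{0} → X := fun o => (g (a o)).1 with hedef
    set D : Set X := e '' Set.Iio om1 with hDdef
    have he_inj : Set.InjOn e (Set.Iio om1) := by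
      intro x hx y hy hxy
      by_contra hne
      rcases lt_or_gt_of_ne hne with hl | hl
      · exact absurd ((ha_mono y hy x hl).1) (by
          have := hg_inj (a x) (ha_lt x hx) (a y) (ha_lt y hy) hxy
          rw [this]; exact lt_irrefl _)
      · exact absurd ((ha_mono x hx y hl).1) (by
          have := hg_inj (a x) (ha_lt x hx) (a y) (ha_lt y hy) hxy
          rw [this]; exact lt_irrefl _)
    have hDdisc : DiscreteTopology ↥D := by
      apply discrete_of_isolated
      rintro _ ⟨ξ, hξ, rfl⟩
      refine ⟨V (g (a ξ)).2 ∩ (closure (f '' Set.Iio (hfun (a ξ))))ᶜ,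
        (hVo _).inter isClosed_closure.isOpen_compl, ?_⟩
      apply Set.eq_singleton_iff_unique_mem.mpr
      constructor
      · refine ⟨⟨hgV _ (ha_lt ξ hξ), ?_⟩, ⟨ξ, hξ, rfl⟩⟩
        have h0 := hfd _ (hfun_lt _ (ha_lt ξ hξ))
        rw [hfun_eq _ (ha_lt ξ hξ)] at h0
        exact h0
      · rintro x ⟨⟨hxV, hxC⟩, ⟨ζ, hζ, rfl⟩⟩
        rcases lt_trichotomy ζ ξ with hl | hl | hl
        · exfalso
          apply hxC
          have h1 : hfun (a ζ) < hfun (a ξ) := (ha_mono ξ hξ ζ hl).2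
          have h2 : f (hfun (a ζ)) = e ζ := hfun_eq _ (ha_lt ζ (lt_trans hl hξ))
          exact subset_closure ⟨hfun (a ζ), h1, h2⟩
        · rw [hl]
        · exfalso
          exact hgn (a ζ) (ha_lt ζ hζ) (a ξ) (ha_mono ζ hζ ξ hl).1 hxV
    have hDc : D.Countable := hs D hDdisc
    exact not_countable_Iio_om1 (countable_of_image he_inj hDc)
  · -- L is not separable
    intro hsep
    rw [separableSpace_subtype_iff] at hsep
    obtain ⟨t, htL, htc, hcl⟩ := hsep
    set A : Set Ordinal.{0} := {o | o < om1 ∧ f o ∈ t} with hAdef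
    have hAc : A.Countable := by
      apply countable_of_image (f := f)
      · intro x hx y hy hxy
        exact hfi x hx.1 y hy.1 hxy
      · exact htc.mono (by rintro _ ⟨o, ho, rfl⟩; exact ho.2)
    obtain ⟨o, hoΩ, hob⟩ := exists_bound hAc (fun x hx => hx.1)
    have htsub : t ⊆ f '' Set.Iio o := by
      intro x hx
      obtain ⟨b, hb, rfl⟩ := htL hx
      exact ⟨b, hob b ⟨hb, hx⟩, rfl⟩
    exact hfd o hoΩ ((closure_mono htsub) (hcl ⟨o, hoΩ, rfl⟩))
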